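/- Let x, x', y, y' be points with E[N(z)²] < ∞ for each z ∈ {x, x', y, y'}. Define the centered two-point fields ψ'(x) = h(x)h(x') − E[h(x)h(x')] and φ'(x) = N(x,x') − E[N(x,x')], and analogously ψ'(y) = h(y)h(y') − E[h(y)h(y')] and φ'(y) = N(y,y') − E[N(y,y')]. Then E[ψ'(x)ψ'(y)] = E[φ'(x)φ'(y)] + E[ N(x,y)N(x',y') + N(x,y')N(x',y) − 2·N(x,x',y,y') ]. -/

import Mathlib

open MeasureTheory ProbabilityTheory

set_option linter.unusedSectionVars false

section SignLemmas
variable {Ω : Type*} [MeasurableSpace Ω] {μ : Measure Ω} [IsProbabilityMeasure μ]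
  {Γ : Type*} [Countable Γ] [DecidableEq Γ] {s : Γ → Ω → ℝ}

lemma loop_sign_ae (hsmeas : ∀ γ : Γ, Measurable (s γ))
    (hsign : ∀ γ : Γ, μ {ω | s γ ω = 1} = 1/2 ∧ μ {ω | s γ ω = -1} = 1/2) (γ : Γ) :
    ∀ᵐ ω ∂μ, s γ ω = 1 ∨ s γ ω = -1 := by
  have hA : MeasurableSet {ω | s γ ω = 1} := (hsmeas γ) (measurableSet_singleton 1)
  have hB : MeasurableSet {ω | s γ ω = -1} := (hsmeas γ) (measurableSet_singleton (-1))
  have hd : Disjoint {ω | s γ ω = 1} {ω | s γ ω = -1} := by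
    rw [Set.disjoint_left]; intro ω h1 h2; simp only [Set.mem_setOf_eq] at h1 h2; norm_num [h1] at h2
  have hu : μ ({ω | s γ ω = 1} ∪ {ω | s γ ω = -1}) = 1 := by
    rw [measure_union hd hB, (hsign γ).1, (hsign γ).2]
    exact ENNReal.add_halves 1
  have hz : μ ({ω | s γ ω = 1} ∪ {ω | s γ ω = -1})ᶜ = 0 := by
    rw [measure_compl (hA.union hB) (by simp [hu]), hu, measure_univ, tsub_self]
  rw [ae_iff]
  refine measure_mono_null ?_ hz
  intro ω hω
  simp only [Set.mem_compl_iff, Set.mem_union, Set.mem_setOf_eq]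
  push_neg
  simpa using hω

lemma loop_sign_abs_ae (hsmeas : ∀ γ : Γ, Measurable (s γ))
    (hsign : ∀ γ : Γ, μ {ω | s γ ω = 1} = 1/2 ∧ μ {ω | s γ ω = -1} = 1/2) :
    ∀ᵐ ω ∂μ, ∀ γ : Γ, |s γ ω| ≤ 1 := by
  rw [MeasureTheory.ae_all_iff]
  intro γ
  filter_upwards [loop_sign_ae hsmeas hsign γ] with ω hω
  rcases hω with h | h <;> simp [h]

lemma loop_sign_sq_ae (hsmeas : ∀ γ : Γ, Measurable (s γ))
    (hsign : ∀ γ : Γ, μ {ω | s γ ω = 1} = 1/2 ∧ μ {ω | s γ ω = -1} = 1/2) (γ : Γ) :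
    (fun ω => s γ ω * s γ ω) =ᵐ[μ] fun _ => 1 := by
  filter_upwards [loop_sign_ae hsmeas hsign γ] with ω hω
  rcases hω with h | h <;> simp [h]

lemma loop_sign_integral (hsmeas : ∀ γ : Γ, Measurable (s γ))
    (hsign : ∀ γ : Γ, μ {ω | s γ ω = 1} = 1/2 ∧ μ {ω | s γ ω = -1} = 1/2) (γ : Γ) :
    ∫ ω, s γ ω ∂μ = 0 := by
  have hA : MeasurableSet {ω | s γ ω = 1} := (hsmeas γ) (measurableSet_singleton 1)
  have hB : MeasurableSet {ω | s γ ω = -1} := (hsmeas γ) (measurableSet_singleton (-1))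
  have hcongr : (fun ω => s γ ω) =ᵐ[μ]
      fun ω => Set.indicator {ω | s γ ω = 1} (fun _ => (1:ℝ)) ω
        - Set.indicator {ω | s γ ω = -1} (fun _ => (1:ℝ)) ω := by
    filter_upwards [loop_sign_ae hsmeas hsign γ] with ω hω
    rcases hω with h | h
    · rw [Set.indicator_of_mem (by exact h), Set.indicator_of_notMem (by norm_num [Set.mem_setOf_eq, h])]
      rw [h]; ring
    · rw [Set.indicator_of_notMem (by norm_num [Set.mem_setOf_eq, h]), Set.indicator_of_mem (by exact h)]
      rw [h]; ring
  rw [integral_congr_ae hcongr]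
  rw [integral_sub (integrable_indicator_iff hA |>.mpr (by simp [(hsign γ).1, integrableOn_const]))
      (integrable_indicator_iff hB |>.mpr (by simp [(hsign γ).2, integrableOn_const]))]
  rw [integral_indicator hA, integral_indicator hB]
  simp [measureReal_def, (hsign γ).1, (hsign γ).2]


lemma loop_int_prod (hsmeas : ∀ γ : Γ, Measurable (s γ))
    (habs : ∀ᵐ ω ∂μ, ∀ γ : Γ, |s γ ω| ≤ 1) (t : Finset Γ) :
    Integrable (fun ω => ∏ γ ∈ t, s γ ω) μ := by
  refine Integrable.mono' (integrable_const 1) ?_ ?_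
  · exact (Finset.measurable_prod t fun γ _ => hsmeas γ).aestronglyMeasurable
  · filter_upwards [habs] with ω hω
    calc ‖∏ γ ∈ t, s γ ω‖ = |∏ γ ∈ t, s γ ω| := rfl
    _ ≤ ∏ γ ∈ t, |s γ ω| := (Finset.abs_prod t _).le
    _ ≤ ∏ γ ∈ t, 1 := Finset.prod_le_prod (fun γ _ => abs_nonneg _) (fun γ _ => hω γ)
    _ = 1 := Finset.prod_const_one

lemma loop_integral_prod (hsmeas : ∀ γ : Γ, Measurable (s γ))
    (hsindep : iIndepFun s μ)
    (t : Finset Γ) :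
    ∫ ω, ∏ γ ∈ t, s γ ω ∂μ = ∏ γ ∈ t, ∫ ω, s γ ω ∂μ := by
  classical
  induction t using Finset.induction_on with
  | empty => simp
  | @insert a t ha ih =>
    have hind : IndepFun (∏ j ∈ t, s j) (s a) μ :=
      hsindep.indepFun_finset_prod_of_notMem hsmeas ha
    have hfn : (∏ j ∈ t, s j) = fun ω => ∏ j ∈ t, s j ω := by
      funext ω; exact Finset.prod_apply ω t s
    have h1 : ∫ ω, ∏ γ ∈ insert a t, s γ ω ∂μ = ∫ ω, ((∏ j ∈ t, s j) * s a) ω ∂μ := by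
      refine integral_congr_ae (Filter.Eventually.of_forall fun ω => ?_)
      simp [Finset.prod_insert ha, hfn, mul_comm]
    rw [h1, hind.integral_mul_eq_mul_integral
        (by rw [hfn]; exact (Finset.measurable_prod t fun γ _ => hsmeas γ).aestronglyMeasurable)
        ((hsmeas a).aestronglyMeasurable)]
    rw [show integral μ (∏ j ∈ t, s j) = ∫ ω, ∏ j ∈ t, s j ω ∂μ by rw [hfn], ih,
      Finset.prod_insert ha]
    ring

lemma loop_pair_integral (hsmeas : ∀ γ : Γ, Measurable (s γ))
    (hsign : ∀ γ : Γ, μ {ω | s γ ω = 1} = 1/2 ∧ μ {ω | s γ ω = -1} = 1/2)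
    (hsindep : iIndepFun s μ)
    (a b : Γ) :
    ∫ ω, s a ω * s b ω ∂μ = if a = b then 1 else 0 := by
  by_cases hab : a = b
  · subst hab
    rw [integral_congr_ae (loop_sign_sq_ae hsmeas hsign a), if_pos rfl]
    simp
  · rw [if_neg hab]
    have := (hsindep.indepFun hab).integral_mul_eq_mul_integral (hsmeas a).aestronglyMeasurable
      (hsmeas b).aestronglyMeasurable
    have h2 : ∫ ω, s a ω * s b ω ∂μ = integral μ (s a * s b) := rfl
    rw [h2, this, loop_sign_integral hsmeas hsign a, zero_mul]

lemma loop_quad_integral (hsmeas : ∀ γ : Γ, Measurable (s γ))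
    (hsign : ∀ γ : Γ, μ {ω | s γ ω = 1} = 1/2 ∧ μ {ω | s γ ω = -1} = 1/2)
    (hsindep : iIndepFun s μ)
    (a b c d : Γ) :
    ∫ ω, s a ω * s b ω * s c ω * s d ω ∂μ
      = (if a = b then (1:ℝ) else 0) * (if c = d then 1 else 0)
        + (if a = c then (1:ℝ) else 0) * (if b = d then 1 else 0)
        + (if a = d then (1:ℝ) else 0) * (if b = c then 1 else 0)
        - 2 * (if a = b ∧ a = c ∧ a = d then (1:ℝ) else 0) := by
  have hred : ∀ (u v p q : Γ), (∀ᵐ ω ∂μ, s u ω * s v ω * s p ω * s q ω = s u ω * s v ω * (s p ω * s q ω)) :=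
    fun u v p q => Filter.Eventually.of_forall fun ω => by ring
  by_cases hab : a = b
  · subst hab
    have : ∫ ω, s a ω * s a ω * s c ω * s d ω ∂μ = ∫ ω, s c ω * s d ω ∂μ := by
      refine integral_congr_ae ?_
      filter_upwards [loop_sign_sq_ae hsmeas hsign a] with ω h
      rw [show s a ω * s a ω * s c ω * s d ω = (s a ω * s a ω) * (s c ω * s d ω) by ring, h]
      ring
    rw [this, loop_pair_integral hsmeas hsign hsindep c d]
    by_cases hcd : c = d
    · subst hcd
      by_cases hac : a = c
      · simp [hac]; norm_num
      · simp [hac]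
    · have hnotall : ¬ (a = a ∧ a = c ∧ a = d) := by
        rintro ⟨-, h1, h2⟩; exact hcd (h1 ▸ h2)
      by_cases hac : a = c <;> by_cases had : a = d <;>
        simp_all <;> norm_num
  · by_cases hcd : c = d
    · subst hcd
      have : ∫ ω, s a ω * s b ω * s c ω * s c ω ∂μ = ∫ ω, s a ω * s b ω ∂μ := by
        refine integral_congr_ae ?_
        filter_upwards [loop_sign_sq_ae hsmeas hsign c] with ω h
        rw [show s a ω * s b ω * s c ω * s c ω = (s c ω * s c ω) * (s a ω * s b ω) by ring, h]
        ring
      rw [this, loop_pair_integral hsmeas hsign hsindep a b, if_neg hab]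
      have h3 : ¬ (a = b ∧ a = c ∧ a = c) := fun h => hab h.1
      by_cases hac : a = c <;> by_cases hbc : b = c <;> simp_all <;> norm_num
    · by_cases hac : a = c
      · subst hac
        have : ∫ ω, s a ω * s b ω * s a ω * s d ω ∂μ = ∫ ω, s b ω * s d ω ∂μ := by
          refine integral_congr_ae ?_
          filter_upwards [loop_sign_sq_ae hsmeas hsign a] with ω h
          rw [show s a ω * s b ω * s a ω * s d ω = (s a ω * s a ω) * (s b ω * s d ω) by ring, h]
          ring
        rw [this, loop_pair_integral hsmeas hsign hsindep b d]
        have h3 : ¬ (a = b ∧ a = a ∧ a = d) := fun h => hab h.1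
        by_cases hbd : b = d <;> simp_all <;> norm_num
      · by_cases had : a = d
        · subst had
          have : ∫ ω, s a ω * s b ω * s c ω * s a ω ∂μ = ∫ ω, s b ω * s c ω ∂μ := by
            refine integral_congr_ae ?_
            filter_upwards [loop_sign_sq_ae hsmeas hsign a] with ω h
            rw [show s a ω * s b ω * s c ω * s a ω = (s a ω * s a ω) * (s b ω * s c ω) by ring, h]
            ring
          rw [this, loop_pair_integral hsmeas hsign hsindep b c]
          have h3 : ¬ (a = b ∧ a = c ∧ a = a) := fun h => hab h.1
          by_cases hbc : b = c <;> simp_all <;> norm_num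
        · by_cases hbc : b = c
          · subst hbc
            have : ∫ ω, s a ω * s b ω * s b ω * s d ω ∂μ = ∫ ω, s a ω * s d ω ∂μ := by
              refine integral_congr_ae ?_
              filter_upwards [loop_sign_sq_ae hsmeas hsign b] with ω h
              rw [show s a ω * s b ω * s b ω * s d ω = (s b ω * s b ω) * (s a ω * s d ω) by ring, h]
              ring
            rw [this, loop_pair_integral hsmeas hsign hsindep a d, if_neg had]
            have h3 : ¬ (a = b ∧ a = b ∧ a = d) := fun h => hab h.1
            simp_all
          · by_cases hbd : b = d
            · subst hbd
              have : ∫ ω, s a ω * s b ω * s c ω * s b ω ∂μ = ∫ ω, s a ω * s c ω ∂μ := by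
                refine integral_congr_ae ?_
                filter_upwards [loop_sign_sq_ae hsmeas hsign b] with ω h
                rw [show s a ω * s b ω * s c ω * s b ω = (s b ω * s b ω) * (s a ω * s c ω) by ring, h]
                ring
              rw [this, loop_pair_integral hsmeas hsign hsindep a c, if_neg hac]
              have h3 : ¬ (a = b ∧ a = c ∧ a = b) := fun h => hab h.1
              simp_all
            · -- all distinct
              have hset : ∀ ω, s a ω * s b ω * s c ω * s d ω
                  = ∏ γ ∈ ({a, b, c, d} : Finset Γ), s γ ω := by
                intro ω
                rw [show ({a, b, c, d} : Finset Γ) = insert a (insert b (insert c ({d} : Finset Γ))) from rfl]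
                rw [Finset.prod_insert (by simp [hab, hac, had]),
                  Finset.prod_insert (by simp [hbc, hbd]),
                  Finset.prod_insert (by simp [hcd]), Finset.prod_singleton]
                ring
              simp only [hset]
              rw [loop_integral_prod hsmeas hsindep]
              rw [Finset.prod_eq_zero (Finset.mem_insert_self a _)
                (loop_sign_integral hsmeas hsign a)]
              simp [hab, hac, had, hbc, hbd, hcd]


lemma loop_int_mul2 (hsmeas : ∀ γ : Γ, Measurable (s γ))
    (habs : ∀ᵐ ω ∂μ, ∀ γ : Γ, |s γ ω| ≤ 1) (a b : Γ) :
    Integrable (fun ω => s a ω * s b ω) μ := by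
  refine Integrable.mono' (integrable_const 1) ((hsmeas a).mul (hsmeas b)).aestronglyMeasurable ?_
  filter_upwards [habs] with ω hω
  rw [Real.norm_eq_abs, abs_mul]
  calc |s a ω| * |s b ω| ≤ 1 * 1 := by
        exact mul_le_mul (hω a) (hω b) (abs_nonneg _) zero_le_one
  _ = 1 := one_mul 1

lemma loop_int_mul4 (hsmeas : ∀ γ : Γ, Measurable (s γ))
    (habs : ∀ᵐ ω ∂μ, ∀ γ : Γ, |s γ ω| ≤ 1) (a b c d : Γ) :
    Integrable (fun ω => s a ω * s b ω * s c ω * s d ω) μ := by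
  refine Integrable.mono' (integrable_const 1)
    ((((hsmeas a).mul (hsmeas b)).mul (hsmeas c)).mul (hsmeas d)).aestronglyMeasurable ?_
  filter_upwards [habs] with ω hω
  rw [Real.norm_eq_abs, abs_mul, abs_mul, abs_mul]
  have h1 := hω a; have h2 := hω b; have h3 := hω c; have h4 := hω d
  have n2 := abs_nonneg (s b ω); have n3 := abs_nonneg (s c ω)
  have n4 := abs_nonneg (s d ω)
  have hab : |s a ω| * |s b ω| ≤ 1 := mul_le_one₀ h1 n2 h2
  have habc : |s a ω| * |s b ω| * |s c ω| ≤ 1 :=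
    mul_le_one₀ hab n3 h3
  exact mul_le_one₀ habc n4 h4

lemma sum2_if (A B : Finset Γ) :
    (∑ a ∈ A, ∑ b ∈ B, if a = b then (1:ℝ) else 0) = ((A ∩ B).card : ℝ) := by
  have h1 : ∀ a : Γ, (∑ b ∈ B, if a = b then (1:ℝ) else 0) = if a ∈ B then 1 else 0 :=
    fun a => Finset.sum_ite_eq B a fun _ => (1:ℝ)
  simp only [h1]
  rw [Finset.sum_boole, Finset.filter_mem_eq_inter]

lemma loop_M2 (hsmeas : ∀ γ : Γ, Measurable (s γ))
    (hsign : ∀ γ : Γ, μ {ω | s γ ω = 1} = 1/2 ∧ μ {ω | s γ ω = -1} = 1/2)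
    (hsindep : iIndepFun s μ)
    (A B : Finset Γ) :
    ∫ ω, (∑ γ ∈ A, s γ ω) * (∑ γ ∈ B, s γ ω) ∂μ = ((A ∩ B).card : ℝ) := by
  have habs := loop_sign_abs_ae hsmeas hsign
  have hexp : ∀ ω : Ω, (∑ γ ∈ A, s γ ω) * (∑ γ ∈ B, s γ ω)
      = ∑ a ∈ A, ∑ b ∈ B, s a ω * s b ω := fun ω => Finset.sum_mul_sum A B _ _
  simp only [hexp]
  rw [integral_finset_sum A fun a _ =>
    integrable_finset_sum B fun b _ => loop_int_mul2 hsmeas habs a b]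
  have : ∀ a ∈ A, ∫ ω, ∑ b ∈ B, s a ω * s b ω ∂μ
      = ∑ b ∈ B, if a = b then (1:ℝ) else 0 := by
    intro a _
    rw [integral_finset_sum B fun b _ => loop_int_mul2 hsmeas habs a b]
    exact Finset.sum_congr rfl fun b _ => loop_pair_integral hsmeas hsign hsindep a b
  rw [Finset.sum_congr rfl this, sum2_if]

lemma sum_comm4 (U V W Z : Finset Γ) (f : Γ → Γ → Γ → Γ → ℝ) :
    (∑ a ∈ U, ∑ b ∈ V, ∑ c ∈ W, ∑ d ∈ Z, f a b c d)
      = ∑ c ∈ W, ∑ d ∈ Z, ∑ a ∈ U, ∑ b ∈ V, f a b c d := by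
  have e1 : (∑ a ∈ U, ∑ b ∈ V, ∑ c ∈ W, ∑ d ∈ Z, f a b c d)
      = ∑ a ∈ U, ∑ c ∈ W, ∑ b ∈ V, ∑ d ∈ Z, f a b c d :=
    Finset.sum_congr rfl fun a _ => Finset.sum_comm
  have e2 : (∑ a ∈ U, ∑ c ∈ W, ∑ b ∈ V, ∑ d ∈ Z, f a b c d)
      = ∑ c ∈ W, ∑ a ∈ U, ∑ b ∈ V, ∑ d ∈ Z, f a b c d := Finset.sum_comm
  have e3 : (∑ c ∈ W, ∑ a ∈ U, ∑ b ∈ V, ∑ d ∈ Z, f a b c d)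
      = ∑ c ∈ W, ∑ a ∈ U, ∑ d ∈ Z, ∑ b ∈ V, f a b c d :=
    Finset.sum_congr rfl fun c _ => Finset.sum_congr rfl fun a _ => Finset.sum_comm
  have e4 : (∑ c ∈ W, ∑ a ∈ U, ∑ d ∈ Z, ∑ b ∈ V, f a b c d)
      = ∑ c ∈ W, ∑ d ∈ Z, ∑ a ∈ U, ∑ b ∈ V, f a b c d :=
    Finset.sum_congr rfl fun c _ => Finset.sum_comm
  rw [e1, e2, e3, e4]

lemma sum4_ab_cd (A B C D : Finset Γ) (F G : Γ → Γ → ℝ) :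
    (∑ a ∈ A, ∑ b ∈ B, ∑ c ∈ C, ∑ d ∈ D, F a b * G c d)
      = (∑ a ∈ A, ∑ b ∈ B, F a b) * (∑ c ∈ C, ∑ d ∈ D, G c d) := by
  simp only [Finset.sum_mul, Finset.mul_sum]
  exact sum_comm4 A B C D fun a b c d => F a b * G c d

lemma sum4_ac_bd (A B C D : Finset Γ) (F G : Γ → Γ → ℝ) :
    (∑ a ∈ A, ∑ b ∈ B, ∑ c ∈ C, ∑ d ∈ D, F a c * G b d)
      = (∑ a ∈ A, ∑ c ∈ C, F a c) * (∑ b ∈ B, ∑ d ∈ D, G b d) := by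
  have h : ∀ a : Γ, (∑ b ∈ B, ∑ c ∈ C, ∑ d ∈ D, F a c * G b d)
      = ∑ c ∈ C, ∑ b ∈ B, ∑ d ∈ D, F a c * G b d := fun a => Finset.sum_comm
  simp only [h, Finset.sum_mul, Finset.mul_sum]
  exact sum_comm4 A C B D fun a c b d => F a c * G b d

lemma sum4_ad_bc (A B C D : Finset Γ) (F G : Γ → Γ → ℝ) :
    (∑ a ∈ A, ∑ b ∈ B, ∑ c ∈ C, ∑ d ∈ D, F a d * G b c)
      = (∑ a ∈ A, ∑ d ∈ D, F a d) * (∑ b ∈ B, ∑ c ∈ C, G b c) := by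
  have h1 : ∀ a b : Γ, (∑ c ∈ C, ∑ d ∈ D, F a d * G b c)
      = ∑ d ∈ D, ∑ c ∈ C, F a d * G b c := fun a b => Finset.sum_comm
  have h2 : ∀ a : Γ, (∑ b ∈ B, ∑ d ∈ D, ∑ c ∈ C, F a d * G b c)
      = ∑ d ∈ D, ∑ b ∈ B, ∑ c ∈ C, F a d * G b c := fun a => Finset.sum_comm
  simp only [h1, h2, Finset.sum_mul, Finset.mul_sum]
  exact sum_comm4 A D B C fun a d b c => F a d * G b c

lemma sum4_quad (A B C D : Finset Γ) :
    (∑ a ∈ A, ∑ b ∈ B, ∑ c ∈ C, ∑ d ∈ D,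
        if a = b ∧ a = c ∧ a = d then (1:ℝ) else 0)
      = ((A ∩ B ∩ C ∩ D).card : ℝ) := by
  have hd : ∀ a b c : Γ, (∑ d ∈ D, if a = b ∧ a = c ∧ a = d then (1:ℝ) else 0)
      = if a = b ∧ a = c ∧ a ∈ D then 1 else 0 := by
    intro a b c
    by_cases h : a = b ∧ a = c
    · obtain ⟨hab, hac⟩ := h
      subst hab; subst hac
      have h1 : ∀ d : Γ, (if a = a ∧ a = a ∧ a = d then (1:ℝ) else 0)
          = if a = d then 1 else 0 := fun d => by simp
      simp only [h1, Finset.sum_ite_eq D a fun _ => (1:ℝ)]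
      simp
    · have h1 : ∀ d : Γ, (if a = b ∧ a = c ∧ a = d then (1:ℝ) else 0) = 0 :=
        fun d => by rw [if_neg (by tauto)]
      simp only [h1, Finset.sum_const_zero]
      rw [if_neg (by tauto)]
  have hc : ∀ a b : Γ, (∑ c ∈ C, if a = b ∧ a = c ∧ a ∈ D then (1:ℝ) else 0)
      = if a = b ∧ a ∈ C ∧ a ∈ D then 1 else 0 := by
    intro a b
    by_cases h : a = b ∧ a ∈ D
    · obtain ⟨hab, haD⟩ := h
      subst hab
      have h1 : ∀ c : Γ, (if a = a ∧ a = c ∧ a ∈ D then (1:ℝ) else 0)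
          = if a = c then 1 else 0 := fun c => by simp [haD]
      simp only [h1, Finset.sum_ite_eq C a fun _ => (1:ℝ)]
      simp [haD]
    · have h1 : ∀ c : Γ, (if a = b ∧ a = c ∧ a ∈ D then (1:ℝ) else 0) = 0 :=
        fun c => by rw [if_neg (by tauto)]
      simp only [h1, Finset.sum_const_zero]
      rw [if_neg (by tauto)]
  have hb : ∀ a : Γ, (∑ b ∈ B, if a = b ∧ a ∈ C ∧ a ∈ D then (1:ℝ) else 0)
      = if a ∈ B ∧ a ∈ C ∧ a ∈ D then 1 else 0 := by
    intro a
    by_cases h : a ∈ C ∧ a ∈ D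
    · have h1 : ∀ b : Γ, (if a = b ∧ a ∈ C ∧ a ∈ D then (1:ℝ) else 0)
          = if a = b then 1 else 0 := fun b => by simp [h.1, h.2]
      simp only [h1, Finset.sum_ite_eq B a fun _ => (1:ℝ)]
      simp [h.1, h.2]
    · have h1 : ∀ b : Γ, (if a = b ∧ a ∈ C ∧ a ∈ D then (1:ℝ) else 0) = 0 :=
        fun b => by rw [if_neg (by tauto)]
      simp only [h1, Finset.sum_const_zero]
      rw [if_neg (by tauto)]
  simp only [hd, hc, hb]
  rw [Finset.sum_boole]
  congr 1
  congr 1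
  ext a
  simp only [Finset.mem_filter, Finset.mem_inter]
  tauto

lemma loop_M4 (hsmeas : ∀ γ : Γ, Measurable (s γ))
    (hsign : ∀ γ : Γ, μ {ω | s γ ω = 1} = 1/2 ∧ μ {ω | s γ ω = -1} = 1/2)
    (hsindep : iIndepFun s μ)
    (A B C D : Finset Γ) :
    ∫ ω, (∑ γ ∈ A, s γ ω) * (∑ γ ∈ B, s γ ω) * (∑ γ ∈ C, s γ ω) * (∑ γ ∈ D, s γ ω) ∂μ
      = ((A ∩ B).card : ℝ) * ((C ∩ D).card : ℝ)
        + ((A ∩ C).card : ℝ) * ((B ∩ D).card : ℝ)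
        + ((A ∩ D).card : ℝ) * ((B ∩ C).card : ℝ)
        - 2 * ((A ∩ B ∩ C ∩ D).card : ℝ) := by
  have habs := loop_sign_abs_ae hsmeas hsign
  have hexp : ∀ ω : Ω, (∑ γ ∈ A, s γ ω) * (∑ γ ∈ B, s γ ω) * (∑ γ ∈ C, s γ ω) * (∑ γ ∈ D, s γ ω)
      = ∑ a ∈ A, ∑ b ∈ B, ∑ c ∈ C, ∑ d ∈ D, s a ω * s b ω * s c ω * s d ω := by
    intro ω
    simp only [Finset.sum_mul, Finset.mul_sum]
    conv_rhs => rw [sum_comm4 A B C D fun a b c d => s a ω * s b ω * s c ω * s d ω]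
    conv_rhs => rw [Finset.sum_comm]
    exact Finset.sum_congr rfl fun d _ => Finset.sum_congr rfl fun c _ => Finset.sum_comm
  simp only [hexp]
  rw [integral_finset_sum A fun a _ => integrable_finset_sum B fun b _ =>
    integrable_finset_sum C fun c _ => integrable_finset_sum D fun d _ =>
      loop_int_mul4 hsmeas habs a b c d]
  have hswap : ∀ a ∈ A, ∫ ω, ∑ b ∈ B, ∑ c ∈ C, ∑ d ∈ D, s a ω * s b ω * s c ω * s d ω ∂μ
      = ∑ b ∈ B, ∑ c ∈ C, ∑ d ∈ D, ∫ ω, s a ω * s b ω * s c ω * s d ω ∂μ := by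
    intro a _
    rw [integral_finset_sum B fun b _ => integrable_finset_sum C fun c _ =>
      integrable_finset_sum D fun d _ => loop_int_mul4 hsmeas habs a b c d]
    refine Finset.sum_congr rfl fun b _ => ?_
    rw [integral_finset_sum C fun c _ => integrable_finset_sum D fun d _ =>
      loop_int_mul4 hsmeas habs a b c d]
    refine Finset.sum_congr rfl fun c _ => ?_
    rw [integral_finset_sum D fun d _ => loop_int_mul4 hsmeas habs a b c d]
  rw [Finset.sum_congr rfl hswap]
  have hquad : ∀ a b c d : Γ, ∫ ω, s a ω * s b ω * s c ω * s d ω ∂μ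
      = ((if a = b then (1:ℝ) else 0) * (if c = d then 1 else 0)
        + (if a = c then (1:ℝ) else 0) * (if b = d then 1 else 0)
        + (if a = d then (1:ℝ) else 0) * (if b = c then 1 else 0))
        - 2 * (if a = b ∧ a = c ∧ a = d then (1:ℝ) else 0) :=
    fun a b c d => loop_quad_integral hsmeas hsign hsindep a b c d
  simp only [hquad]
  simp only [Finset.sum_sub_distrib, Finset.sum_add_distrib]
  rw [sum4_ab_cd A B C D (fun a b => if a = b then (1:ℝ) else 0) (fun c d => if c = d then (1:ℝ) else 0)]
  rw [sum4_ac_bd A B C D (fun a c => if a = c then (1:ℝ) else 0) (fun b d => if b = d then (1:ℝ) else 0)]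
  rw [sum4_ad_bc A B C D (fun a d => if a = d then (1:ℝ) else 0) (fun b c => if b = c then (1:ℝ) else 0)]
  simp only [← Finset.mul_sum]
  rw [sum4_quad A B C D, sum2_if A B, sum2_if C D, sum2_if A C, sum2_if B D, sum2_if A D, sum2_if B C]
  try ring

lemma loop_transfer {E : Type*} [MeasurableSpace E] [Countable E] [DiscreteMeasurableSpace E]
    {W : Type*} [MeasurableSpace W]
    (Q : Ω → E) (U : Ω → W) (hQ : Measurable Q) (hU : Measurable U)
    (hind : IndepFun Q U μ)
    (Φ : E → W → ℝ) (hΦ : ∀ v, Measurable (Φ v))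
    (hsec : ∀ v : E, Integrable (fun ω => Φ v (U ω)) μ)
    (G g : E → ℝ)
    (hG : ∀ v : E, ∫ ω, Φ v (U ω) ∂μ = G v)
    (hbound : ∀ v : E, ∫ ω, ‖Φ v (U ω)‖ ∂μ ≤ g v)
    (hgint : Integrable (fun ω => g (Q ω)) μ) :
    Integrable (fun ω => Φ (Q ω) (U ω)) μ ∧
      ∫ ω, Φ (Q ω) (U ω) ∂μ = ∫ ω, G (Q ω) ∂μ := by
  have hΨ : Measurable (fun p : E × W => Φ p.1 p.2) := by
    have h1 : Measurable fun p : W × E => Φ p.2 p.1 :=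
      measurable_from_prod_countable_left fun v => hΦ v
    exact h1.comp measurable_swap
  have hmap : μ.map (fun ω => (Q ω, U ω)) = (μ.map Q).prod (μ.map U) :=
    (indepFun_iff_map_prod_eq_prod_map_map hQ.aemeasurable hU.aemeasurable).mp hind
  have hnorm : ∀ v : E, ∫ u, ‖Φ v u‖ ∂(μ.map U) = ∫ ω, ‖Φ v (U ω)‖ ∂μ := fun v =>
    integral_map hU.aemeasurable ((hΦ v).norm.aestronglyMeasurable)
  have hint : Integrable (fun p : E × W => Φ p.1 p.2) ((μ.map Q).prod (μ.map U)) := by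
    rw [integrable_prod_iff hΨ.aestronglyMeasurable]
    constructor
    · refine Filter.Eventually.of_forall fun v => ?_
      rw [integrable_map_measure (hΦ v).aestronglyMeasurable hU.aemeasurable]
      exact hsec v
    · refine Integrable.mono'
        ((integrable_map_measure (Measurable.aestronglyMeasurable Measurable.of_discrete)
          hQ.aemeasurable).mpr hgint)
        (Measurable.aestronglyMeasurable Measurable.of_discrete) ?_
      refine Filter.Eventually.of_forall fun v => ?_
      rw [Real.norm_eq_abs, abs_of_nonneg (integral_nonneg fun u => norm_nonneg _), hnorm v]
      exact hbound v
  have h2 : Integrable (fun p : E × W => Φ p.1 p.2) (μ.map fun ω => (Q ω, U ω)) :=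
    hmap ▸ hint
  have hcomp : Integrable (fun ω => Φ (Q ω) (U ω)) μ :=
    (integrable_map_measure hΨ.aestronglyMeasurable
      (hQ.aemeasurable.prodMk hU.aemeasurable)).mp h2
  refine ⟨hcomp, ?_⟩
  have h3 : ∫ ω, Φ (Q ω) (U ω) ∂μ = ∫ p : E × W, Φ p.1 p.2 ∂((μ.map Q).prod (μ.map U)) := by
    rw [← hmap, integral_map (hQ.aemeasurable.prodMk hU.aemeasurable) hΨ.aestronglyMeasurable]
  rw [h3, integral_prod _ hint]
  have h4 : ∀ v : E, ∫ u, Φ v u ∂(μ.map U) = G v := fun v => by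
    rw [integral_map hU.aemeasurable (hΦ v).aestronglyMeasurable]; exact hG v
  simp only [h4]
  rw [integral_map hQ.aemeasurable
    (Measurable.aestronglyMeasurable (Measurable.of_discrete (f := G)))]

lemma loop_habs' (habs : ∀ᵐ ω ∂μ, ∀ γ : Γ, |s γ ω| ≤ 1) :
    ∀ᵐ ω ∂μ, ∀ A : Finset Γ, |∑ γ ∈ A, s γ ω| ≤ (A.card : ℝ) := by
  filter_upwards [habs] with ω hω A
  calc |∑ γ ∈ A, s γ ω| ≤ ∑ γ ∈ A, |s γ ω| := Finset.abs_sum_le_sum_abs _ _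
  _ ≤ ∑ γ ∈ A, 1 := Finset.sum_le_sum fun γ _ => hω γ
  _ = (A.card : ℝ) := by simp

lemma loop_hA_meas (hsmeas : ∀ γ : Γ, Measurable (s γ)) (A : Finset Γ) :
    Measurable (fun ω => ∑ γ ∈ A, s γ ω) :=
  Finset.measurable_sum A fun γ _ => hsmeas γ

lemma loop_int_hAB (hsmeas : ∀ γ : Γ, Measurable (s γ))
    (habs : ∀ᵐ ω ∂μ, ∀ γ : Γ, |s γ ω| ≤ 1) (A B : Finset Γ) :
    Integrable (fun ω => (∑ γ ∈ A, s γ ω) * (∑ γ ∈ B, s γ ω)) μ := by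
  refine Integrable.mono' (integrable_const ((A.card : ℝ) * (B.card : ℝ)))
    ((loop_hA_meas hsmeas A).mul (loop_hA_meas hsmeas B)).aestronglyMeasurable ?_
  filter_upwards [loop_habs' habs] with ω hω
  rw [Real.norm_eq_abs, abs_mul]
  exact mul_le_mul (hω A) (hω B) (abs_nonneg _) (Nat.cast_nonneg _)

lemma loop_int_hABCD (hsmeas : ∀ γ : Γ, Measurable (s γ))
    (habs : ∀ᵐ ω ∂μ, ∀ γ : Γ, |s γ ω| ≤ 1) (A B C D : Finset Γ) :
    Integrable (fun ω =>
      (∑ γ ∈ A, s γ ω) * (∑ γ ∈ B, s γ ω) * (∑ γ ∈ C, s γ ω) * (∑ γ ∈ D, s γ ω)) μ := by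
  refine Integrable.mono'
    (integrable_const ((A.card : ℝ) * (B.card : ℝ) * (C.card : ℝ) * (D.card : ℝ)))
    ((((loop_hA_meas hsmeas A).mul (loop_hA_meas hsmeas B)).mul
      (loop_hA_meas hsmeas C)).mul (loop_hA_meas hsmeas D)).aestronglyMeasurable ?_
  filter_upwards [loop_habs' habs] with ω hω
  rw [Real.norm_eq_abs, abs_mul, abs_mul, abs_mul]
  have n1 := abs_nonneg (∑ γ ∈ A, s γ ω); have n2 := abs_nonneg (∑ γ ∈ B, s γ ω)
  have n3 := abs_nonneg (∑ γ ∈ C, s γ ω); have n4 := abs_nonneg (∑ γ ∈ D, s γ ω)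
  have m1 := Nat.cast_nonneg (α := ℝ) A.card; have m2 := Nat.cast_nonneg (α := ℝ) B.card
  have m3 := Nat.cast_nonneg (α := ℝ) C.card
  exact mul_le_mul (mul_le_mul (mul_le_mul (hω A) (hω B) n2 m1) (hω C) n3 (by positivity))
    (hω D) n4 (by positivity)

lemma loop_int_sqAB (hsmeas : ∀ γ : Γ, Measurable (s γ))
    (habs : ∀ᵐ ω ∂μ, ∀ γ : Γ, |s γ ω| ≤ 1) (A B : Finset Γ) :
    Integrable (fun ω => ((∑ γ ∈ A, s γ ω) * (∑ γ ∈ B, s γ ω))^2) μ := by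
  have h : ∀ ω : Ω, ((∑ γ ∈ A, s γ ω) * (∑ γ ∈ B, s γ ω))^2
      = (∑ γ ∈ A, s γ ω) * (∑ γ ∈ B, s γ ω) * (∑ γ ∈ A, s γ ω) * (∑ γ ∈ B, s γ ω) :=
    fun ω => by ring
  simp only [h]
  exact loop_int_hABCD hsmeas habs A B A B

lemma loop_sq_integral_le (hsmeas : ∀ γ : Γ, Measurable (s γ))
    (hsign : ∀ γ : Γ, μ {ω | s γ ω = 1} = 1/2 ∧ μ {ω | s γ ω = -1} = 1/2)
    (hsindep : iIndepFun s μ)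
    (A B : Finset Γ) :
    ∫ ω, ((∑ γ ∈ A, s γ ω) * (∑ γ ∈ B, s γ ω))^2 ∂μ ≤ 3 * (A.card : ℝ) * (B.card : ℝ) := by
  have h : ∀ ω : Ω, ((∑ γ ∈ A, s γ ω) * (∑ γ ∈ B, s γ ω))^2
      = (∑ γ ∈ A, s γ ω) * (∑ γ ∈ B, s γ ω) * (∑ γ ∈ A, s γ ω) * (∑ γ ∈ B, s γ ω) :=
    fun ω => by ring
  simp only [h]
  rw [loop_M4 hsmeas hsign hsindep A B A B]
  have h1 : ((A ∩ B).card : ℝ) ≤ (A.card : ℝ) :=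
    Nat.cast_le.mpr (Finset.card_le_card Finset.inter_subset_left)
  have h2 : ((A ∩ B).card : ℝ) ≤ (B.card : ℝ) :=
    Nat.cast_le.mpr (Finset.card_le_card Finset.inter_subset_right)
  have h2' : ((B ∩ A).card : ℝ) = ((A ∩ B).card : ℝ) := by rw [Finset.inter_comm]
  have h3 : (0:ℝ) ≤ ((A ∩ B).card : ℝ) := Nat.cast_nonneg _
  have h4 : (0:ℝ) ≤ ((A ∩ B ∩ A ∩ B).card : ℝ) := Nat.cast_nonneg _
  have h5 : ((A ∩ A).card : ℝ) = (A.card : ℝ) := by rw [Finset.inter_self]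
  have h6 : ((B ∩ B).card : ℝ) = (B.card : ℝ) := by rw [Finset.inter_self]
  rw [h2', h5, h6]
  nlinarith [mul_le_mul h1 h2 h3 (Nat.cast_nonneg (α := ℝ) A.card)]

lemma loop_norm_bound2 (hsmeas : ∀ γ : Γ, Measurable (s γ))
    (habs : ∀ᵐ ω ∂μ, ∀ γ : Γ, |s γ ω| ≤ 1) (A B : Finset Γ) :
    ∫ ω, ‖(∑ γ ∈ A, s γ ω) * (∑ γ ∈ B, s γ ω)‖ ∂μ ≤ (A.card : ℝ) * (B.card : ℝ) := by
  have h := integral_mono_ae ((loop_int_hAB hsmeas habs A B).norm)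
    (integrable_const ((A.card : ℝ) * (B.card : ℝ))) ?_
  · simpa using h
  · filter_upwards [loop_habs' habs] with ω hω
    rw [Real.norm_eq_abs, abs_mul]
    exact mul_le_mul (hω A) (hω B) (abs_nonneg _) (Nat.cast_nonneg _)

lemma loop_norm_bound4 (hsmeas : ∀ γ : Γ, Measurable (s γ))
    (hsign : ∀ γ : Γ, μ {ω | s γ ω = 1} = 1/2 ∧ μ {ω | s γ ω = -1} = 1/2)
    (hsindep : iIndepFun s μ)
    (A B C D : Finset Γ) :
    ∫ ω, ‖(∑ γ ∈ A, s γ ω) * (∑ γ ∈ B, s γ ω) * (∑ γ ∈ C, s γ ω) * (∑ γ ∈ D, s γ ω)‖ ∂μ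
      ≤ (3/4) * ((A.card : ℝ)^2 + (B.card : ℝ)^2 + (C.card : ℝ)^2 + (D.card : ℝ)^2) := by
  have habs := loop_sign_abs_ae hsmeas hsign
  have hstep : ∫ ω, ‖(∑ γ ∈ A, s γ ω) * (∑ γ ∈ B, s γ ω) * (∑ γ ∈ C, s γ ω) * (∑ γ ∈ D, s γ ω)‖ ∂μ
      ≤ ∫ ω, (((∑ γ ∈ A, s γ ω) * (∑ γ ∈ B, s γ ω))^2
          + ((∑ γ ∈ C, s γ ω) * (∑ γ ∈ D, s γ ω))^2) / 2 ∂μ := by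
    refine integral_mono_ae ((loop_int_hABCD hsmeas habs A B C D).norm)
      (((loop_int_sqAB hsmeas habs A B).add (loop_int_sqAB hsmeas habs C D)).div_const 2) ?_
    refine Filter.Eventually.of_forall fun ω => ?_
    show ‖(∑ γ ∈ A, s γ ω) * (∑ γ ∈ B, s γ ω) * (∑ γ ∈ C, s γ ω) * (∑ γ ∈ D, s γ ω)‖
        ≤ (((∑ γ ∈ A, s γ ω) * (∑ γ ∈ B, s γ ω))^2
            + ((∑ γ ∈ C, s γ ω) * (∑ γ ∈ D, s γ ω))^2) / 2
    rw [Real.norm_eq_abs]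
    rcases abs_cases ((∑ γ ∈ A, s γ ω) * (∑ γ ∈ B, s γ ω)
        * (∑ γ ∈ C, s γ ω) * (∑ γ ∈ D, s γ ω)) with ⟨h, -⟩ | ⟨h, -⟩ <;> rw [h] <;>
      nlinarith [sq_nonneg ((∑ γ ∈ A, s γ ω) * (∑ γ ∈ B, s γ ω)
          - (∑ γ ∈ C, s γ ω) * (∑ γ ∈ D, s γ ω)),
        sq_nonneg ((∑ γ ∈ A, s γ ω) * (∑ γ ∈ B, s γ ω)
          + (∑ γ ∈ C, s γ ω) * (∑ γ ∈ D, s γ ω))]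
  refine hstep.trans ?_
  rw [integral_div, integral_add (loop_int_sqAB hsmeas habs A B) (loop_int_sqAB hsmeas habs C D)]
  have b1 := loop_sq_integral_le hsmeas hsign hsindep A B
  have b2 := loop_sq_integral_le hsmeas hsign hsindep C D
  have q1 : (A.card : ℝ) * (B.card : ℝ) ≤ ((A.card : ℝ)^2 + (B.card : ℝ)^2) / 2 := by
    nlinarith [sq_nonneg ((A.card : ℝ) - (B.card : ℝ))]
  have q2 : (C.card : ℝ) * (D.card : ℝ) ≤ ((C.card : ℝ)^2 + (D.card : ℝ)^2) / 2 := by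
    nlinarith [sq_nonneg ((C.card : ℝ) - (D.card : ℝ))]
  linarith

end SignLemmas

lemma cov_helper {Ω : Type*} [MeasurableSpace Ω] (μ : Measure Ω) [IsProbabilityMeasure μ]
    (P R : Ω → ℝ) (hPR : Integrable (fun ω => P ω * R ω) μ)
    (hP : Integrable P μ) (hR : Integrable R μ) :
    ∫ ω, (P ω - ∫ ω', P ω' ∂μ) * (R ω - ∫ ω', R ω' ∂μ) ∂μ
      = ∫ ω, P ω * R ω ∂μ - (∫ ω', P ω' ∂μ) * (∫ ω', R ω' ∂μ) := by
  set a := ∫ ω', P ω' ∂μ with ha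
  set b := ∫ ω', R ω' ∂μ with hb
  have e : ∀ ω, (P ω - a) * (R ω - b) = P ω * R ω - a * R ω - b * P ω + a * b :=
    fun ω => by ring
  rw [integral_congr_ae (Filter.Eventually.of_forall e)]
  rw [integral_add
      (show Integrable (fun ω => P ω * R ω - a * R ω - b * P ω) μ from
        (hPR.sub (hR.const_mul a)).sub (hP.const_mul b)) (integrable_const (a*b)),
    integral_sub
      (show Integrable (fun ω => P ω * R ω - a * R ω) μ from hPR.sub (hR.const_mul a))
      (show Integrable (fun ω => b * P ω) μ from hP.const_mul b),
    integral_sub hPR (show Integrable (fun ω => a * R ω) μ from hR.const_mul a),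
    integral_const_mul, integral_const_mul, integral_const]
  simp only [measure_univ, probReal_univ, ENNReal.toReal_one, smul_eq_mul, one_mul, ← ha, ← hb]
  ring


/-- The finite sets of loops (`Finset Γ`) carry the discrete (`⊤`) sigma-algebra. -/
instance (priority := low) loopSigmaAlgebra (Γ : Type*) : MeasurableSpace (Finset Γ) := ⊤

instance loopMSC (Γ : Type*) : @MeasurableSingletonClass (Finset Γ) (loopSigmaAlgebra Γ) :=
  @MeasurableSingletonClass.mk _ (loopSigmaAlgebra Γ) (fun _ => MeasurableSpace.measurableSet_top)

set_option maxHeartbeats 1000000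

/-- In the loop-sign model, with two-point centered fields
`ψ'(x) = h(x)h(x') − E[h(x)h(x')]`, `φ'(x) = N(x,x') − E[N(x,x')]` (and analogously at `y`),
and assuming `E[N(z)²] < ∞` for `z ∈ {x, x', y, y'}`, one has
`E[ψ'(x)ψ'(y)] = E[φ'(x)φ'(y)] + E[N(x,y)N(x',y') + N(x,y')N(x',y) − 2 N(x,x',y,y')]`. -/
theorem loopSign_twoPoint_psi_phi_covariance
    {Ω : Type*} [MeasurableSpace Ω] (μ : Measure Ω) [IsProbabilityMeasure μ]
    {Γ : Type*} [Countable Γ] [DecidableEq Γ] {X : Type*}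
    (S : X → Ω → Finset Γ) (s : Γ → Ω → ℝ)
    (hSmeas : ∀ x : X, Measurable (S x))
    (hsmeas : ∀ γ : Γ, Measurable (s γ))
    (hsign : ∀ γ : Γ, μ {ω | s γ ω = 1} = 1/2 ∧ μ {ω | s γ ω = -1} = 1/2)
    (hsindep : iIndepFun s μ)
    (hSsindep : IndepFun (fun ω (x : X) => S x ω) (fun ω (γ : Γ) => s γ ω) μ)
    (x x' y y' : X)
    (hx : Integrable (fun ω => ((S x ω).card : ℝ) ^ 2) μ)
    (hx' : Integrable (fun ω => ((S x' ω).card : ℝ) ^ 2) μ)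
    (hy : Integrable (fun ω => ((S y ω).card : ℝ) ^ 2) μ)
    (hy' : Integrable (fun ω => ((S y' ω).card : ℝ) ^ 2) μ)
    -- the centered two-point fields:
    (ψx ψy φx φy : Ω → ℝ)
    (hψx : ψx = fun ω => (∑ γ ∈ S x ω, s γ ω) * (∑ γ ∈ S x' ω, s γ ω)
        - ∫ ω', (∑ γ ∈ S x ω', s γ ω') * (∑ γ ∈ S x' ω', s γ ω') ∂μ)
    (hψy : ψy = fun ω => (∑ γ ∈ S y ω, s γ ω) * (∑ γ ∈ S y' ω, s γ ω)
        - ∫ ω', (∑ γ ∈ S y ω', s γ ω') * (∑ γ ∈ S y' ω', s γ ω') ∂μ)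
    (hφx : φx = fun ω => ((S x ω ∩ S x' ω).card : ℝ) - ∫ ω', ((S x ω' ∩ S x' ω').card : ℝ) ∂μ)
    (hφy : φy = fun ω => ((S y ω ∩ S y' ω).card : ℝ) - ∫ ω', ((S y ω' ∩ S y' ω').card : ℝ) ∂μ) :
    ∫ ω, ψx ω * ψy ω ∂μ
      = ∫ ω, φx ω * φy ω ∂μ
        + ∫ ω, (((S x ω ∩ S y ω).card : ℝ) * ((S x' ω ∩ S y' ω).card : ℝ)
            + ((S x ω ∩ S y' ω).card : ℝ) * ((S x' ω ∩ S y ω).card : ℝ)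
            - 2 * ((S x ω ∩ S x' ω ∩ S y ω ∩ S y' ω).card : ℝ)) ∂μ := by
  have habs := loop_sign_abs_ae hsmeas hsign
  have hUmeas : Measurable (fun ω (γ : Γ) => s γ ω) := measurable_pi_lambda _ fun γ => hsmeas γ
  have hNmeas : ∀ z w : X, Measurable (fun ω => ((S z ω ∩ S w ω).card : ℝ)) := by
    intro z w
    have h1 : Measurable (fun ω => (S z ω, S w ω)) := (hSmeas z).prodMk (hSmeas w)
    have h2 : Measurable (fun p : Finset Γ × Finset Γ => ((p.1 ∩ p.2).card : ℝ)) :=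
      Measurable.of_discrete
    have h3 := h2.comp h1
    exact h3
  have hN4meas : Measurable (fun ω => ((S x ω ∩ S x' ω ∩ S y ω ∩ S y' ω).card : ℝ)) := by
    have h1 : Measurable (fun ω => ((S x ω, S x' ω), (S y ω, S y' ω))) :=
      ((hSmeas x).prodMk (hSmeas x')).prodMk ((hSmeas y).prodMk (hSmeas y'))
    have h2 : Measurable (fun p : (Finset Γ × Finset Γ) × (Finset Γ × Finset Γ) =>
        ((p.1.1 ∩ p.1.2 ∩ p.2.1 ∩ p.2.2).card : ℝ)) := Measurable.of_discrete
    have h3 := h2.comp h1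
    exact h3
  have hcmeas : ∀ z : X, Measurable (fun ω => ((S z ω).card : ℝ)) := by
    intro z
    have h2 : Measurable (fun A : Finset Γ => (A.card : ℝ)) := Measurable.of_discrete
    have h3 := h2.comp (hSmeas z)
    exact h3
  -- integrability of products of cards
  have hcc : ∀ z w : X, Integrable (fun ω => ((S z ω).card : ℝ)^2) μ →
      Integrable (fun ω => ((S w ω).card : ℝ)^2) μ →
      Integrable (fun ω => ((S z ω).card : ℝ) * ((S w ω).card : ℝ)) μ := by
    intro z w h1 h2
    refine Integrable.mono'
      (show Integrable (fun ω => (((S z ω).card : ℝ)^2 + ((S w ω).card : ℝ)^2)/2) μ from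
        (h1.add h2).div_const 2)
      ((hcmeas z).mul (hcmeas w)).aestronglyMeasurable ?_
    refine Filter.Eventually.of_forall fun ω => ?_
    show ‖((S z ω).card : ℝ) * ((S w ω).card : ℝ)‖
        ≤ (((S z ω).card : ℝ)^2 + ((S w ω).card : ℝ)^2)/2
    have p1 : (0:ℝ) ≤ ((S z ω).card : ℝ) := Nat.cast_nonneg _
    have p2 : (0:ℝ) ≤ ((S w ω).card : ℝ) := Nat.cast_nonneg _
    rw [Real.norm_eq_abs, abs_of_nonneg (mul_nonneg p1 p2)]
    nlinarith [sq_nonneg (((S z ω).card : ℝ) - ((S w ω).card : ℝ))]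
  have hNN : ∀ z₁ w₁ z₂ w₂ : X, Integrable (fun ω => ((S z₁ ω).card : ℝ)^2) μ →
      Integrable (fun ω => ((S z₂ ω).card : ℝ)^2) μ →
      Integrable (fun ω => ((S z₁ ω ∩ S w₁ ω).card : ℝ) * ((S z₂ ω ∩ S w₂ ω).card : ℝ)) μ := by
    intro z₁ w₁ z₂ w₂ h1 h2
    refine Integrable.mono'
      (show Integrable (fun ω => (((S z₁ ω).card : ℝ)^2 + ((S z₂ ω).card : ℝ)^2)/2) μ from
        (h1.add h2).div_const 2)
      ((hNmeas z₁ w₁).mul (hNmeas z₂ w₂)).aestronglyMeasurable ?_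
    refine Filter.Eventually.of_forall fun ω => ?_
    show ‖((S z₁ ω ∩ S w₁ ω).card : ℝ) * ((S z₂ ω ∩ S w₂ ω).card : ℝ)‖
        ≤ (((S z₁ ω).card : ℝ)^2 + ((S z₂ ω).card : ℝ)^2)/2
    have e1 : ((S z₁ ω ∩ S w₁ ω).card : ℝ) ≤ ((S z₁ ω).card : ℝ) :=
      Nat.cast_le.mpr (Finset.card_le_card Finset.inter_subset_left)
    have e2 : ((S z₂ ω ∩ S w₂ ω).card : ℝ) ≤ ((S z₂ ω).card : ℝ) :=
      Nat.cast_le.mpr (Finset.card_le_card Finset.inter_subset_left)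
    have p1 : (0:ℝ) ≤ ((S z₁ ω ∩ S w₁ ω).card : ℝ) := Nat.cast_nonneg _
    have p2 : (0:ℝ) ≤ ((S z₂ ω ∩ S w₂ ω).card : ℝ) := Nat.cast_nonneg _
    have p3 : (0:ℝ) ≤ ((S z₁ ω).card : ℝ) := Nat.cast_nonneg _
    rw [Real.norm_eq_abs, abs_of_nonneg (mul_nonneg p1 p2)]
    nlinarith [sq_nonneg (((S z₁ ω).card : ℝ) - ((S z₂ ω).card : ℝ)),
      mul_le_mul e1 e2 p2 p3]
  have hNint : ∀ z w : X, Integrable (fun ω => ((S z ω).card : ℝ)^2) μ →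
      Integrable (fun ω => ((S z ω ∩ S w ω).card : ℝ)) μ := by
    intro z w h1
    refine Integrable.mono'
      (show Integrable (fun ω => (((S z ω).card : ℝ)^2 + 1)/2) μ from
        (h1.add (integrable_const 1)).div_const 2)
      (hNmeas z w).aestronglyMeasurable ?_
    refine Filter.Eventually.of_forall fun ω => ?_
    show ‖((S z ω ∩ S w ω).card : ℝ)‖ ≤ (((S z ω).card : ℝ)^2 + 1)/2
    have e1 : ((S z ω ∩ S w ω).card : ℝ) ≤ ((S z ω).card : ℝ) :=
      Nat.cast_le.mpr (Finset.card_le_card Finset.inter_subset_left)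
    rw [Real.norm_eq_abs, abs_of_nonneg (Nat.cast_nonneg _)]
    nlinarith [sq_nonneg (((S z ω).card : ℝ) - 1)]
  have hN4int : Integrable (fun ω => ((S x ω ∩ S x' ω ∩ S y ω ∩ S y' ω).card : ℝ)) μ := by
    refine Integrable.mono'
      (show Integrable (fun ω => (((S x ω).card : ℝ)^2 + 1)/2) μ from
        (hx.add (integrable_const 1)).div_const 2)
      hN4meas.aestronglyMeasurable ?_
    refine Filter.Eventually.of_forall fun ω => ?_
    show ‖((S x ω ∩ S x' ω ∩ S y ω ∩ S y' ω).card : ℝ)‖ ≤ (((S x ω).card : ℝ)^2 + 1)/2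
    have e1 : ((S x ω ∩ S x' ω ∩ S y ω ∩ S y' ω).card : ℝ) ≤ ((S x ω).card : ℝ) := by
      refine Nat.cast_le.mpr (Finset.card_le_card ?_)
      exact (Finset.inter_subset_left.trans (Finset.inter_subset_left.trans
        Finset.inter_subset_left))
    rw [Real.norm_eq_abs, abs_of_nonneg (Nat.cast_nonneg _)]
    nlinarith [sq_nonneg (((S x ω).card : ℝ) - 1)]
  -- transfer for the x-pair
  have hindx : IndepFun (fun ω => (S x ω, S x' ω)) (fun ω (γ : Γ) => s γ ω) μ := by
    have hπ : Measurable (fun f : X → Finset Γ => (f x, f x')) :=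
      (measurable_pi_apply x).prodMk (measurable_pi_apply x')
    exact hSsindep.comp hπ measurable_id
  have hTx := loop_transfer (μ := μ) (fun ω => (S x ω, S x' ω)) (fun ω (γ : Γ) => s γ ω)
    ((hSmeas x).prodMk (hSmeas x')) hUmeas hindx
    (fun v u => (∑ γ ∈ v.1, u γ) * (∑ γ ∈ v.2, u γ))
    (fun v => (Finset.measurable_sum v.1 fun γ _ => measurable_pi_apply γ).mul
      (Finset.measurable_sum v.2 fun γ _ => measurable_pi_apply γ))
    (fun v => by exact loop_int_hAB hsmeas habs v.1 v.2)
    (fun v => ((v.1 ∩ v.2).card : ℝ))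
    (fun v => (v.1.card : ℝ) * (v.2.card : ℝ))
    (fun v => by exact loop_M2 hsmeas hsign hsindep v.1 v.2)
    (fun v => by exact loop_norm_bound2 hsmeas habs v.1 v.2)
    (by exact hcc x x' hx hx')
  have hPint : Integrable (fun ω => (∑ γ ∈ S x ω, s γ ω) * (∑ γ ∈ S x' ω, s γ ω)) μ := hTx.1
  have hPeq : ∫ ω, (∑ γ ∈ S x ω, s γ ω) * (∑ γ ∈ S x' ω, s γ ω) ∂μ
      = ∫ ω, ((S x ω ∩ S x' ω).card : ℝ) ∂μ := hTx.2
  -- transfer for the y-pair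
  have hindy : IndepFun (fun ω => (S y ω, S y' ω)) (fun ω (γ : Γ) => s γ ω) μ := by
    have hπ : Measurable (fun f : X → Finset Γ => (f y, f y')) :=
      (measurable_pi_apply y).prodMk (measurable_pi_apply y')
    exact hSsindep.comp hπ measurable_id
  have hTy := loop_transfer (μ := μ) (fun ω => (S y ω, S y' ω)) (fun ω (γ : Γ) => s γ ω)
    ((hSmeas y).prodMk (hSmeas y')) hUmeas hindy
    (fun v u => (∑ γ ∈ v.1, u γ) * (∑ γ ∈ v.2, u γ))
    (fun v => (Finset.measurable_sum v.1 fun γ _ => measurable_pi_apply γ).mul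
      (Finset.measurable_sum v.2 fun γ _ => measurable_pi_apply γ))
    (fun v => by exact loop_int_hAB hsmeas habs v.1 v.2)
    (fun v => ((v.1 ∩ v.2).card : ℝ))
    (fun v => (v.1.card : ℝ) * (v.2.card : ℝ))
    (fun v => by exact loop_M2 hsmeas hsign hsindep v.1 v.2)
    (fun v => by exact loop_norm_bound2 hsmeas habs v.1 v.2)
    (by exact hcc y y' hy hy')
  have hRint : Integrable (fun ω => (∑ γ ∈ S y ω, s γ ω) * (∑ γ ∈ S y' ω, s γ ω)) μ := hTy.1
  have hReq : ∫ ω, (∑ γ ∈ S y ω, s γ ω) * (∑ γ ∈ S y' ω, s γ ω) ∂μ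
      = ∫ ω, ((S y ω ∩ S y' ω).card : ℝ) ∂μ := hTy.2
  -- transfer for the quadruple
  have hind4 : IndepFun (fun ω => ((S x ω, S x' ω), (S y ω, S y' ω)))
      (fun ω (γ : Γ) => s γ ω) μ := by
    have hπ : Measurable (fun f : X → Finset Γ => ((f x, f x'), (f y, f y'))) :=
      ((measurable_pi_apply x).prodMk (measurable_pi_apply x')).prodMk
        ((measurable_pi_apply y).prodMk (measurable_pi_apply y'))
    exact hSsindep.comp hπ measurable_id
  have hT4 := loop_transfer (μ := μ) (fun ω => ((S x ω, S x' ω), (S y ω, S y' ω)))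
    (fun ω (γ : Γ) => s γ ω)
    ((((hSmeas x).prodMk (hSmeas x')).prodMk ((hSmeas y).prodMk (hSmeas y')))) hUmeas hind4
    (fun v u => (∑ γ ∈ v.1.1, u γ) * (∑ γ ∈ v.1.2, u γ)
      * (∑ γ ∈ v.2.1, u γ) * (∑ γ ∈ v.2.2, u γ))
    (fun v => (((Finset.measurable_sum v.1.1 fun γ _ => measurable_pi_apply γ).mul
      (Finset.measurable_sum v.1.2 fun γ _ => measurable_pi_apply γ)).mul
      (Finset.measurable_sum v.2.1 fun γ _ => measurable_pi_apply γ)).mul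
      (Finset.measurable_sum v.2.2 fun γ _ => measurable_pi_apply γ))
    (fun v => by exact loop_int_hABCD hsmeas habs v.1.1 v.1.2 v.2.1 v.2.2)
    (fun v => ((v.1.1 ∩ v.1.2).card : ℝ) * ((v.2.1 ∩ v.2.2).card : ℝ)
      + ((v.1.1 ∩ v.2.1).card : ℝ) * ((v.1.2 ∩ v.2.2).card : ℝ)
      + ((v.1.1 ∩ v.2.2).card : ℝ) * ((v.1.2 ∩ v.2.1).card : ℝ)
      - 2 * ((v.1.1 ∩ v.1.2 ∩ v.2.1 ∩ v.2.2).card : ℝ))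
    (fun v => (3/4) * ((v.1.1.card : ℝ)^2 + (v.1.2.card : ℝ)^2
      + (v.2.1.card : ℝ)^2 + (v.2.2.card : ℝ)^2))
    (fun v => by exact loop_M4 hsmeas hsign hsindep v.1.1 v.1.2 v.2.1 v.2.2)
    (fun v => by exact loop_norm_bound4 hsmeas hsign hsindep v.1.1 v.1.2 v.2.1 v.2.2)
    (by exact ((((hx.add hx').add hy).add hy').const_mul (3/4)))
  have hQint : Integrable (fun ω => (∑ γ ∈ S x ω, s γ ω) * (∑ γ ∈ S x' ω, s γ ω)
      * (∑ γ ∈ S y ω, s γ ω) * (∑ γ ∈ S y' ω, s γ ω)) μ := hT4.1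
  have hQeq : ∫ ω, (∑ γ ∈ S x ω, s γ ω) * (∑ γ ∈ S x' ω, s γ ω)
        * (∑ γ ∈ S y ω, s γ ω) * (∑ γ ∈ S y' ω, s γ ω) ∂μ
      = ∫ ω, (((S x ω ∩ S x' ω).card : ℝ) * ((S y ω ∩ S y' ω).card : ℝ)
          + ((S x ω ∩ S y ω).card : ℝ) * ((S x' ω ∩ S y' ω).card : ℝ)
          + ((S x ω ∩ S y' ω).card : ℝ) * ((S x' ω ∩ S y ω).card : ℝ)
          - 2 * ((S x ω ∩ S x' ω ∩ S y ω ∩ S y' ω).card : ℝ)) ∂μ := hT4.2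
  -- final assembly
  have hPRint : Integrable (fun ω => ((∑ γ ∈ S x ω, s γ ω) * (∑ γ ∈ S x' ω, s γ ω))
      * ((∑ γ ∈ S y ω, s γ ω) * (∑ γ ∈ S y' ω, s γ ω))) μ :=
    hQint.congr (Filter.Eventually.of_forall fun ω => by ring)
  have h1 : ∫ ω, ψx ω * ψy ω ∂μ
      = ∫ ω, ((∑ γ ∈ S x ω, s γ ω) * (∑ γ ∈ S x' ω, s γ ω))
          * ((∑ γ ∈ S y ω, s γ ω) * (∑ γ ∈ S y' ω, s γ ω)) ∂μ
        - (∫ ω', (∑ γ ∈ S x ω', s γ ω') * (∑ γ ∈ S x' ω', s γ ω') ∂μ)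
          * (∫ ω', (∑ γ ∈ S y ω', s γ ω') * (∑ γ ∈ S y' ω', s γ ω') ∂μ) := by
    rw [hψx, hψy]
    exact cov_helper μ _ _ hPRint hPint hRint
  have h2 : ∫ ω, φx ω * φy ω ∂μ
      = ∫ ω, ((S x ω ∩ S x' ω).card : ℝ) * ((S y ω ∩ S y' ω).card : ℝ) ∂μ
        - (∫ ω', ((S x ω' ∩ S x' ω').card : ℝ) ∂μ)
          * (∫ ω', ((S y ω' ∩ S y' ω').card : ℝ) ∂μ) := by
    rw [hφx, hφy]
    exact cov_helper μ _ _ (hNN x x' y y' hx hy) (hNint x x' hx) (hNint y y' hy)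
  have hrest : Integrable (fun ω => ((S x ω ∩ S y ω).card : ℝ) * ((S x' ω ∩ S y' ω).card : ℝ)
      + ((S x ω ∩ S y' ω).card : ℝ) * ((S x' ω ∩ S y ω).card : ℝ)
      - 2 * ((S x ω ∩ S x' ω ∩ S y ω ∩ S y' ω).card : ℝ)) μ :=
    ((hNN x y x' y' hx hx').add (hNN x y' x' y hx hx')).sub (hN4int.const_mul 2)
  have h3 : ∫ ω, ((∑ γ ∈ S x ω, s γ ω) * (∑ γ ∈ S x' ω, s γ ω))
        * ((∑ γ ∈ S y ω, s γ ω) * (∑ γ ∈ S y' ω, s γ ω)) ∂μ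
      = ∫ ω, ((S x ω ∩ S x' ω).card : ℝ) * ((S y ω ∩ S y' ω).card : ℝ) ∂μ
        + ∫ ω, (((S x ω ∩ S y ω).card : ℝ) * ((S x' ω ∩ S y' ω).card : ℝ)
            + ((S x ω ∩ S y' ω).card : ℝ) * ((S x' ω ∩ S y ω).card : ℝ)
            - 2 * ((S x ω ∩ S x' ω ∩ S y ω ∩ S y' ω).card : ℝ)) ∂μ := by
    have e1 : ∫ ω, ((∑ γ ∈ S x ω, s γ ω) * (∑ γ ∈ S x' ω, s γ ω))
          * ((∑ γ ∈ S y ω, s γ ω) * (∑ γ ∈ S y' ω, s γ ω)) ∂μ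
        = ∫ ω, (∑ γ ∈ S x ω, s γ ω) * (∑ γ ∈ S x' ω, s γ ω)
            * (∑ γ ∈ S y ω, s γ ω) * (∑ γ ∈ S y' ω, s γ ω) ∂μ :=
      integral_congr_ae (Filter.Eventually.of_forall fun ω => by ring)
    rw [e1, hQeq, ← integral_add (hNN x x' y y' hx hy) hrest]
    exact integral_congr_ae (Filter.Eventually.of_forall fun ω => by ring)
  rw [h1, h2, hPeq, hReq, h3]
  ring
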